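/- Let A be an abelian group and f, g : A → ℤ surjective homomorphisms. If ker f is finitely generated, then ker f is isomorphic to ker g. -/

import Mathlib

open Function

/-- A surjective hom to ℤ splits. -/
lemma splitZ {M : Type*} [AddCommGroup M] (ψ : M →+ ℤ) (hs : Surjective ψ) :
    Nonempty (M ≃+ ψ.ker × ℤ) := by
  obtain ⟨a, ha⟩ := hs 1
  refine ⟨{ toFun := fun x => (⟨x - ψ x • a, ?_⟩, ψ x)
            invFun := fun p => p.1.1 + p.2 • a
            left_inv := ?_
            right_inv := ?_
            map_add' := ?_ }⟩
  · simp [AddMonoidHom.mem_ker, ha]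
  · intro x; simp
  · rintro ⟨⟨k, hk⟩, n⟩
    have hk0 : ψ k = 0 := hk
    simp [hk0, ha, Prod.ext_iff, Subtype.ext_iff]
  · intro x y
    ext <;> simp [add_smul] <;> abel

lemma kerEqOfLe {A : Type*} [AddCommGroup A] (f g : A →+ ℤ)
    (hf : Surjective f) (hg : Surjective g) (hle : f.ker ≤ g.ker) : f.ker = g.ker := by
  obtain ⟨a, ha⟩ := hf 1
  have key : ∀ x, g x = f x * g a := by
    intro x
    have hx : x - f x • a ∈ f.ker := by simp [AddMonoidHom.mem_ker, ha]
    have := hle hx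
    simp only [AddMonoidHom.mem_ker, map_sub, map_zsmul, sub_eq_zero] at this
    simpa [smul_eq_mul] using this
  have hunit : IsUnit (g a) := by
    obtain ⟨b, hb⟩ := hg 1
    exact IsUnit.of_mul_eq_one _ (by rw [mul_comm, ← hb, key b])
  ext x
  simp only [AddMonoidHom.mem_ker, key x]
  rcases Int.isUnit_iff.mp hunit with h1 | h1 <;> rw [h1] <;> simp

lemma keyIso {A : Type*} [AddCommGroup A] (K : AddSubgroup A) (g : A →+ ℤ)
    (hx : ∃ x ∈ K, g x ≠ 0) :
    Nonempty (↥K ≃+ ↥(K ⊓ g.ker) × ℤ) := by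
  obtain ⟨d, hd⟩ := Int.subgroup_cyclic ((g.comp K.subtype).range)
  rw [← AddSubgroup.zmultiples_eq_closure] at hd
  have hdvd : ∀ x : K, d ∣ g x := by
    intro x
    have : g x ∈ AddSubgroup.zmultiples d := by
      rw [← hd]; exact ⟨x, rfl⟩
    obtain ⟨n, hn⟩ := this
    exact ⟨n, by rw [← hn]; simp [mul_comm]⟩
  have hd0 : d ≠ 0 := by
    rintro rfl
    obtain ⟨x, hxK, hx0⟩ := hx
    exact hx0 (by simpa using hdvd ⟨x, hxK⟩)
  have hmem : ∀ n : ℤ, ∃ x : K, g x = d * n := by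
    intro n
    have : d * n ∈ AddSubgroup.zmultiples d := ⟨n, by simp [mul_comm]⟩
    rw [← hd] at this
    obtain ⟨x, hxe⟩ := this
    exact ⟨x, hxe⟩
  let ψ : ↥K →+ ℤ :=
    { toFun := fun x => g x / d
      map_zero' := by simp
      map_add' := by
        intro x y
        obtain ⟨c, hc⟩ := hdvd x
        obtain ⟨e, he⟩ := hdvd y
        show g ↑(x + y) / d = g ↑x / d + g ↑y / d
        rw [AddSubgroup.coe_add, map_add, hc, he, ← mul_add, Int.mul_ediv_cancel_left _ hd0,
          Int.mul_ediv_cancel_left _ hd0, Int.mul_ediv_cancel_left _ hd0] }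
  have hψs : Surjective ψ := by
    intro n
    obtain ⟨x, hxe⟩ := hmem n
    exact ⟨x, by simp [ψ, hxe, Int.mul_ediv_cancel_left _ hd0]⟩
  have hker : ψ.ker = (K ⊓ g.ker).addSubgroupOf K := by
    ext x
    obtain ⟨c, hc⟩ := hdvd x
    simp [ψ, AddMonoidHom.mem_ker, AddSubgroup.mem_addSubgroupOf, AddMonoidHom.mem_ker,
      hc, Int.mul_ediv_cancel_left _ hd0, hd0, x.2]
  obtain ⟨e⟩ := splitZ ψ hψs
  rw [hker] at e
  exact ⟨e.trans (AddEquiv.prodCongr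
    (AddSubgroup.addSubgroupOfEquivOfLe inf_le_left) (AddEquiv.refl ℤ))⟩

theorem stmt4 (A : Type*) [AddCommGroup A] (f g : A →+ ℤ)
    (hf : Function.Surjective f) (hg : Function.Surjective g)
    (h : f.ker.FG) : Nonempty (f.ker ≃+ g.ker) := by
  by_cases h1 : f.ker ≤ g.ker
  · exact ⟨AddEquiv.addSubgroupCongr (kerEqOfLe f g hf hg h1)⟩
  by_cases h2 : g.ker ≤ f.ker
  · exact ⟨AddEquiv.addSubgroupCongr (kerEqOfLe g f hg hf h2).symm⟩
  obtain ⟨x, hxK, hx0⟩ := SetLike.not_le_iff_exists.mp h1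
  obtain ⟨y, hyL, hy0⟩ := SetLike.not_le_iff_exists.mp h2
  obtain ⟨e1⟩ := keyIso f.ker g (⟨x, hxK, hx0⟩)
  obtain ⟨e2⟩ := keyIso g.ker f (⟨y, hyL, hy0⟩)
  have hcomm : f.ker ⊓ g.ker = g.ker ⊓ f.ker := inf_comm _ _
  exact ⟨e1.trans ((AddEquiv.prodCongr (AddEquiv.addSubgroupCongr hcomm)
    (AddEquiv.refl ℤ)).trans e2.symm)⟩
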